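/- Every commutative semiperfect ring R is isomorphic as a ring to a direct product T × S, where S is a semisimple ring and T is an almost small ring (i.e. T as a T-module is τ_cG-torsion: for all T-submodules U ⊊ V ⊆ T, the quotient V/U contains a nonzero small T-module). -/

import Mathlib

universe u

/-- A left `R`-module `K` is a *small module* if there exist a left `R`-module `L` and an
injective `R`-linear map `f : K → L` whose image is a superfluous submodule of `L`. -/
def IsSmallModule (R : Type u) [Ring R] (K : Type u) [AddCommGroup K] [Module R K] : Prop :=
  ∃ (L : Type u) (_ : AddCommGroup L) (_ : Module R L) (f : K →ₗ[R] L),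
    Function.Injective f ∧
      ∀ X : Submodule R L, LinearMap.range f ⊔ X = ⊤ → X = ⊤

/-- `Z*(M)` is the sum of all submodules of `M` that are small modules. -/
def ZStar (R : Type u) [Ring R] (M : Type u) [AddCommGroup M] [Module R M] : Submodule R M :=
  sSup {N : Submodule R M | IsSmallModule R ↥N}

/-- A left `R`-module `M` is `τ_cG`-torsion if `Z*(V/U) ≠ 0` for all submodules `U ⊊ V ⊆ M`. -/
def IsCGTorsion (R : Type u) [Ring R] (M : Type u) [AddCommGroup M] [Module R M] : Prop :=
  ∀ U V : Submodule R M, U < V → ZStar R (↥V ⧸ Submodule.comap V.subtype U) ≠ ⊥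

section Aux
variable {T : Type u} [CommRing T]

lemma aux_isUnit_one_sub {j : T} (hj : j ∈ Ideal.jacobson (⊥ : Ideal T)) (t : T) :
    IsUnit (1 - t * j) := by
  have h := Ideal.mem_jacobson_bot.mp hj (-t)
  have e : j * -t + 1 = 1 - t * j := by ring
  rwa [e] at h

lemma aux_idem_jacobson_eq_zero {x : T} (hx : IsIdempotentElem x)
    (hj : x ∈ Ideal.jacobson (⊥ : Ideal T)) : x = 0 := by
  have hu : IsUnit (1 - 1 * x) := aux_isUnit_one_sub hj 1
  rw [one_mul] at hu
  obtain ⟨u, hu⟩ := hu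
  have h0 : x * (1 - x) = 0 := by
    rw [mul_sub, mul_one, hx.eq, sub_self]
  have : x * (u : T) = 0 := by rw [hu]; exact h0
  have := congrArg (· * ((u⁻¹ : Tˣ) : T)) this
  simpa [mul_assoc] using this

-- L6
lemma aux_jacobson_map {S : Type u} [CommRing S] (g : T →+* S)
    (hg : Function.Surjective g) {x : T} (hx : x ∈ Ideal.jacobson (⊥ : Ideal T)) :
    g x ∈ Ideal.jacobson (⊥ : Ideal S) := by
  rw [Ideal.mem_jacobson_bot]
  intro y
  obtain ⟨z, rfl⟩ := hg y
  have : g x * g z + 1 = g (x * z + 1) := by simp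
  rw [this]
  exact (Ideal.mem_jacobson_bot.mp hx z).map g

-- L2
lemma aux_semisimple_ideal_idem {Q : Type u} [CommRing Q] (hQ : IsSemisimpleRing Q)
    (A : Ideal Q) : ∃ e : Q, IsIdempotentElem e ∧ e ∈ A ∧ ∀ x ∈ A, x * e = x := by
  haveI := hQ
  obtain ⟨B, hB⟩ := exists_isCompl (A : Submodule Q Q)
  have htop : A ⊔ B = ⊤ := hB.sup_eq_top
  have hbot : A ⊓ B = ⊥ := hB.inf_eq_bot
  have h1 : (1 : Q) ∈ A ⊔ B := htop ▸ Submodule.mem_top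
  obtain ⟨e, he, b, hb, heb⟩ := Submodule.mem_sup.mp h1
  have key : ∀ x ∈ A, x * e = x := by
    intro x hx
    have h2 : x * b ∈ A ⊓ B := by
      constructor
      · have := A.smul_mem b hx
        simpa [smul_eq_mul, mul_comm] using this
      · have := B.smul_mem x hb
        simpa [smul_eq_mul] using this
    have h3 : x * b = 0 := by rw [hbot] at h2; exact h2
    have : x * (e + b) = x := by rw [heb, mul_one]
    rw [mul_add, h3, add_zero] at this
    exact this
  exact ⟨e, key e he, he, key⟩

end Aux

section Small
variable {T : Type u} [CommRing T] {M : Type u} [AddCommGroup M] [Module T M]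

-- L4: span of j • w is a small module, for j in the Jacobson radical
lemma aux_small_smul_span {j : T} (hj : j ∈ Ideal.jacobson (⊥ : Ideal T)) (w : M) :
    IsSmallModule T ↥(Submodule.span T {j • w}) := by
  have hNC : Submodule.span T {j • w} ≤ Submodule.span T {w} :=
    Submodule.span_le.mpr (Set.singleton_subset_iff.mpr (Submodule.mem_span_singleton.mpr ⟨j, rfl⟩))
  refine ⟨↥(Submodule.span T {w}), inferInstance, inferInstance, Submodule.inclusion hNC,
    Submodule.inclusion_injective hNC, ?_⟩
  intro X hX
  have hwmem : w ∈ Submodule.span T {w} := Submodule.mem_span_singleton_self w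
  have hc0 : (⟨w, hwmem⟩ : ↥(Submodule.span T {w})) ∈
      LinearMap.range (Submodule.inclusion hNC) ⊔ X := by rw [hX]; trivial
  obtain ⟨y, hy, x, hx, hxy⟩ := Submodule.mem_sup.mp hc0
  obtain ⟨n, rfl⟩ := hy
  obtain ⟨t, ht⟩ := Submodule.mem_span_singleton.mp n.2
  have hxcoe : (x : M) = (1 - t * j) • w := by
    have h := congrArg (fun z : ↥(Submodule.span T {w}) => (z : M)) hxy
    have hycoe : ((Submodule.inclusion hNC n : ↥(Submodule.span T {w})) : M) = (t * j) • w := by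
      show (n : M) = (t * j) • w
      rw [← ht, smul_smul]
    simp only [Submodule.coe_add, hycoe] at h
    rw [eq_sub_of_add_eq' h, sub_smul, one_smul]
  obtain ⟨u, hu⟩ := aux_isUnit_one_sub hj t
  have hc0X : (⟨w, hwmem⟩ : ↥(Submodule.span T {w})) ∈ X := by
    have : (⟨w, hwmem⟩ : ↥(Submodule.span T {w})) = ((u⁻¹ : Tˣ) : T) • x := by
      apply Subtype.ext
      show w = ((u⁻¹ : Tˣ) : T) • (x : M)
      rw [hxcoe, ← hu, smul_smul, Units.inv_mul, one_smul]
    rw [this]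
    exact X.smul_mem _ hx
  rw [eq_top_iff]
  rintro ⟨c, hc⟩ -
  obtain ⟨s, hs⟩ := Submodule.mem_span_singleton.mp hc
  have : (⟨c, hc⟩ : ↥(Submodule.span T {w})) = s • (⟨w, hwmem⟩ : ↥(Submodule.span T {w})) :=
    Subtype.ext (by simp [← hs])
  rw [this]
  exact X.smul_mem _ hc0X

-- L3: span of w is a small module when ann(w) is a maximal ideal avoiding a good jacobson elt
lemma aux_small_span_max {w : M} (hw : w ≠ 0) {m : Ideal T} (hm : m.IsMaximal)
    (hann : ∀ t ∈ m, t • w = 0) {a : T} (haJ : a ∈ Ideal.jacobson (⊥ : Ideal T))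
    (ha : ¬ ∃ t ∈ m, a = a * t) :
    IsSmallModule T ↥(Submodule.span T {w}) := by
  classical
  set am : Submodule T T := Submodule.map (a • (LinearMap.id : T →ₗ[T] T)) (m : Submodule T T)
    with ham
  have hker1 : (m : Submodule T T) ≤ LinearMap.ker (LinearMap.toSpanSingleton T M w) := by
    intro t htm
    simpa [LinearMap.mem_ker, LinearMap.toSpanSingleton_apply] using hann t htm
  set χ0 : (T ⧸ (m : Submodule T T)) →ₗ[T] M :=
    Submodule.liftQ _ (LinearMap.toSpanSingleton T M w) hker1 with hχ0
  have hχ0mem : ∀ q, χ0 q ∈ Submodule.span T {w} := by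
    intro q; obtain ⟨t, rfl⟩ := Submodule.Quotient.mk_surjective _ q
    have : χ0 (Submodule.Quotient.mk t) = t • w := rfl
    rw [this]
    exact Submodule.mem_span_singleton.mpr ⟨t, rfl⟩
  set χ : (T ⧸ (m : Submodule T T)) →ₗ[T] ↥(Submodule.span T {w}) :=
    LinearMap.codRestrict _ χ0 hχ0mem with hχ
  have hannw : LinearMap.ker (LinearMap.toSpanSingleton T M w) = (m : Submodule T T) := by
    refine (hm.eq_of_le ?_ hker1).symm
    intro htop
    have : (1 : T) ∈ LinearMap.ker (LinearMap.toSpanSingleton T M w) := htop ▸ Submodule.mem_top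
    simp only [LinearMap.mem_ker, LinearMap.toSpanSingleton_apply, one_smul] at this
    exact hw this
  have hχbij : Function.Bijective χ := by
    constructor
    · rw [← LinearMap.ker_eq_bot]
      rw [eq_bot_iff]
      intro q hq
      obtain ⟨t, rfl⟩ := Submodule.Quotient.mk_surjective _ q
      have h0 : χ0 (Submodule.Quotient.mk t) = 0 := by
        have := congrArg (fun z : ↥(Submodule.span T {w}) => (z : M)) (LinearMap.mem_ker.mp hq)
        exact this
      have h1 : t • w = 0 := h0
      have htm : t ∈ (m : Submodule T T) := by
        rw [← hannw]
        simpa [LinearMap.mem_ker, LinearMap.toSpanSingleton_apply] using h1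
      exact (Submodule.mem_bot T).mpr ((Submodule.Quotient.mk_eq_zero _).mpr htm)
    · rintro ⟨c, hc⟩
      obtain ⟨t, ht⟩ := Submodule.mem_span_singleton.mp hc
      exact ⟨Submodule.Quotient.mk t, Subtype.ext ht⟩
  set e1 := LinearEquiv.ofBijective χ hχbij with he1
  set L := T ⧸ am with hL
  have hker2 : (m : Submodule T T) ≤
      LinearMap.ker (LinearMap.toSpanSingleton T L (Submodule.Quotient.mk a)) := by
    intro t htm
    rw [LinearMap.mem_ker, LinearMap.toSpanSingleton_apply, ← Submodule.Quotient.mk_smul,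
      Submodule.Quotient.mk_eq_zero]
    exact ⟨t, htm, by simp [mul_comm]⟩
  set ψ : (T ⧸ (m : Submodule T T)) →ₗ[T] L :=
    Submodule.liftQ _ (LinearMap.toSpanSingleton T L (Submodule.Quotient.mk a)) hker2 with hψ
  have hψinj : Function.Injective ψ := by
    rw [← LinearMap.ker_eq_bot, eq_bot_iff]
    intro q hq
    obtain ⟨t, rfl⟩ := Submodule.Quotient.mk_surjective _ q
    have h1 : (Submodule.Quotient.mk (t • a) : L) = 0 := by
      rw [Submodule.Quotient.mk_smul]
      exact hq
    rw [Submodule.Quotient.mk_eq_zero] at h1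
    obtain ⟨s, hs, hsa⟩ := h1
    have hsa' : a * s = t * a := hsa
    have htm : t ∈ m := by
      by_contra htm
      obtain ⟨c, u0, hu0, hcu⟩ := hm.exists_inv htm
      apply ha
      refine ⟨c * s + u0, m.add_mem (m.mul_mem_left c hs) hu0, ?_⟩
      have : a * (c * t + u0) = a := by rw [hcu, mul_one]
      calc a = a * (c * t + u0) := this.symm
        _ = c * (t * a) + a * u0 := by ring
        _ = c * (a * s) + a * u0 := by rw [hsa']
        _ = a * (c * s + u0) := by ring
    exact (Submodule.mem_bot T).mpr ((Submodule.Quotient.mk_eq_zero _).mpr htm)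
  refine ⟨L, inferInstance, inferInstance, ψ.comp e1.symm.toLinearMap, ?_, ?_⟩
  · exact hψinj.comp e1.symm.injective
  · intro X hX
    have h1mem : (Submodule.Quotient.mk (1 : T) : L) ∈
        LinearMap.range (ψ.comp e1.symm.toLinearMap) ⊔ X := by rw [hX]; trivial
    obtain ⟨y, hy, x, hx, hxy⟩ := Submodule.mem_sup.mp h1mem
    obtain ⟨n, rfl⟩ := hy
    obtain ⟨t, hq⟩ := Submodule.Quotient.mk_surjective _ (e1.symm.toLinearMap n)
    have hyval : ψ.comp e1.symm.toLinearMap n = (Submodule.Quotient.mk (t * a) : L) := by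
      show ψ (e1.symm.toLinearMap n) = _
      rw [← hq]
      show t • (Submodule.Quotient.mk a : L) = _
      rw [← Submodule.Quotient.mk_smul]
      rfl
    have hxval : x = (Submodule.Quotient.mk (1 - t * a) : L) := by
      have h2 := eq_sub_of_add_eq' hxy
      rw [h2, hyval, ← Submodule.Quotient.mk_sub]
    obtain ⟨u, hu⟩ := aux_isUnit_one_sub haJ t
    have h1X : (Submodule.Quotient.mk (1 : T) : L) ∈ X := by
      have : (Submodule.Quotient.mk (1 : T) : L) = ((u⁻¹ : Tˣ) : T) • x := by
        rw [hxval, ← hu, ← Submodule.Quotient.mk_smul]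
        congr 1
        show (1 : T) = ((u⁻¹ : Tˣ) : T) • (u : T)
        rw [smul_eq_mul, Units.inv_mul]
      rw [this]
      exact X.smul_mem _ hx
    rw [eq_top_iff]
    rintro z -
    obtain ⟨t', rfl⟩ := Submodule.Quotient.mk_surjective _ z
    have : (Submodule.Quotient.mk t' : L) = t' • (Submodule.Quotient.mk (1 : T) : L) := by
      rw [← Submodule.Quotient.mk_smul, smul_eq_mul, mul_one]
    rw [this]
    exact X.smul_mem _ h1X

end Small

/-- Every commutative semiperfect ring is isomorphic, as a ring, to a product `T × S` with `S`
semisimple and `T` almost small. -/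
theorem stmt_9 (R : Type u) [CommRing R]
    (hss : IsSemisimpleRing (R ⧸ Ideal.jacobson (⊥ : Ideal R)))
    (hlift : ∀ x : R ⧸ Ideal.jacobson (⊥ : Ideal R), IsIdempotentElem x →
      ∃ e : R, IsIdempotentElem e ∧ Ideal.Quotient.mk (Ideal.jacobson (⊥ : Ideal R)) e = x) :
    ∃ (T S : Type u) (_ : Ring T) (_ : Ring S),
      Nonempty (R ≃+* T × S) ∧ IsSemisimpleRing S ∧ IsCGTorsion T T := by
  classical
  set J : Ideal R := Ideal.jacobson (⊥ : Ideal R) with hJdef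
  -- the ideal of elements annihilating J
  set A0 : Ideal R :=
    { carrier := {x | ∀ k ∈ J, x * k = 0}
      add_mem' := fun {x y} hx hy k hk => by rw [add_mul, hx k hk, hy k hk, add_zero]
      zero_mem' := fun k hk => by rw [zero_mul]
      smul_mem' := fun c {x} hx k hk => by
        rw [smul_eq_mul, mul_assoc, hx k hk, mul_zero] } with hA0def
  obtain ⟨ebar, hebar_idem, hebarA, hebar_max⟩ :=
    aux_semisimple_ideal_idem hss (Ideal.map (Ideal.Quotient.mk J) A0)
  obtain ⟨e, he_idem, he_mk⟩ := hlift ebar hebar_idem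
  -- e annihilates J
  obtain ⟨a0, ha0, ha0mk⟩ :=
    (Ideal.mem_map_iff_of_surjective _ Ideal.Quotient.mk_surjective).mp hebarA
  have heJ : ∀ k ∈ J, e * k = 0 := by
    intro k hk
    have hj : e - a0 ∈ J := by
      rw [← Ideal.Quotient.eq, he_mk, ha0mk]
    have h1 : e * (e * k) = e * k := by rw [← mul_assoc, he_idem.eq]
    have h2 : a0 * (e * k) = 0 := by
      rw [mul_left_comm, ha0 k hk, mul_zero]
    have h3 : (1 - 1 * (e - a0)) * (e * k) = 0 := by
      have : (1 - 1 * (e - a0)) * (e * k) = e * k - (e * (e * k) - a0 * (e * k)) := by ring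
      rw [this, h1, h2, sub_zero, sub_self]
    exact ((aux_isUnit_one_sub hj 1).mul_right_eq_zero).mp h3
  set Ie : Ideal R := Ideal.span {e} with hIedef
  set If : Ideal R := Ideal.span {1 - e} with hIfdef
  have hsup : Ie ⊔ If = ⊤ := by
    rw [Ideal.eq_top_iff_one]
    have := Submodule.add_mem_sup (Ideal.subset_span (rfl : e ∈ {e}))
      (Ideal.subset_span (rfl : (1 - e) ∈ {1 - e}))
    simpa using this
  have hinf : Ie ⊓ If = ⊥ := by
    rw [eq_bot_iff]
    rintro x ⟨hx1, hx2⟩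
    obtain ⟨c, hc⟩ := Ideal.mem_span_singleton'.mp hx1
    obtain ⟨d, hd⟩ := Ideal.mem_span_singleton'.mp hx2
    have h1 : x * e = x := by rw [← hc, mul_assoc, he_idem.eq]
    have h2 : x * e = 0 := by
      rw [← hd, mul_assoc, sub_mul, one_mul, he_idem.eq, sub_self, mul_zero]
    rw [Submodule.mem_bot, ← h1, h2]
  have hcop : IsCoprime Ie If := (Ideal.isCoprime_iff_sup_eq).mpr hsup
  refine ⟨R ⧸ Ie, R ⧸ If, inferInstance, inferInstance,
    ⟨((RingEquiv.quotientBot R).symm.trans (Ideal.quotEquivOfEq hinf.symm)).trans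
      (Ideal.quotientInfEquivQuotientProd Ie If hcop)⟩, ?_, ?_⟩
  · -- S := R ⧸ If is semisimple
    have hJf : J ≤ If := by
      intro k hk
      have h1 : (1 - e) * k = k := by rw [sub_mul, one_mul, heJ k hk, sub_zero]
      rw [← h1]
      exact Ideal.mul_mem_right _ _ (Ideal.subset_span rfl)
    have hsurj : Function.Surjective (Ideal.Quotient.factor hJf) := by
      intro y
      obtain ⟨r, rfl⟩ := Ideal.Quotient.mk_surjective y
      exact ⟨Ideal.Quotient.mk J r, Ideal.Quotient.factor_mk _ _⟩
    exact RingHom.isSemisimpleRing_of_surjective _ hsurj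
  · -- T := R ⧸ Ie is τ_cG-torsion
    intro U V hUV
    obtain ⟨v, hvV, hvU⟩ := SetLike.exists_of_lt hUV
    set M := ↥V ⧸ Submodule.comap V.subtype U with hMdef
    by_cases hcaseA : ∃ j ∈ Ideal.jacobson (⊥ : Ideal (R ⧸ Ie)), ∃ w, ∃ hw : w ∈ V,
        j • (Submodule.Quotient.mk (⟨w, hw⟩ : ↥V) : M) ≠ 0
    · obtain ⟨j, hjJ, w, hw, hjw⟩ := hcaseA
      have hsmall := aux_small_smul_span hjJ (Submodule.Quotient.mk (⟨w, hw⟩ : ↥V) : M)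
      intro hbot
      have hle : Submodule.span (R ⧸ Ie) {j • (Submodule.Quotient.mk (⟨w, hw⟩ : ↥V) : M)} ≤
          ZStar (R ⧸ Ie) M := le_sSup hsmall
      rw [hbot, le_bot_iff, Submodule.span_singleton_eq_bot] at hle
      exact hjw hle
    · push_neg at hcaseA
      set vbar : M := Submodule.Quotient.mk (⟨v, hvV⟩ : ↥V) with hvbardef
      have hvbar0 : vbar ≠ 0 := by
        intro h0
        rw [hvbardef, Submodule.Quotient.mk_eq_zero] at h0
        exact hvU h0
      set annI : Ideal (R ⧸ Ie) :=
        LinearMap.ker (LinearMap.toSpanSingleton (R ⧸ Ie) M vbar) with hannIdef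
      have hannI_ne : annI ≠ ⊤ := by
        intro h
        have h1 : (1 : R ⧸ Ie) ∈ annI := h ▸ Submodule.mem_top
        rw [hannIdef, LinearMap.mem_ker, LinearMap.toSpanSingleton_apply, one_smul] at h1
        exact hvbar0 h1
      obtain ⟨mT, hmT, hannle⟩ := Ideal.exists_le_maximal annI hannI_ne
      set mkT : R →+* R ⧸ Ie := Ideal.Quotient.mk Ie with hmkTdef
      have hmkTsurj : Function.Surjective mkT := Ideal.Quotient.mk_surjective
      set m : Ideal R := Ideal.comap mkT mT with hmdef
      haveI hmmax : m.IsMaximal := Ideal.comap_isMaximal_of_surjective mkT hmkTsurj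
      have hem : e ∈ m := by
        show mkT e ∈ mT
        have h1 : mkT e = 0 := Ideal.Quotient.eq_zero_iff_mem.mpr (Ideal.subset_span rfl)
        rw [h1]; exact mT.zero_mem
      have hJm : J ≤ m := sInf_le ⟨bot_le, hmmax⟩
      obtain ⟨ε, hε_idem, hεm, hε_max⟩ :=
        aux_semisimple_ideal_idem hss (Ideal.map (Ideal.Quotient.mk J) m)
      obtain ⟨f, hf_idem, hf_mk⟩ := hlift (1 - ε) hε_idem.one_sub
      -- basic facts about f
      have h1f_m : 1 - f ∈ m := by
        obtain ⟨x, hxm, hxε⟩ :=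
          (Ideal.mem_map_iff_of_surjective _ Ideal.Quotient.mk_surjective).mp hεm
        have h1 : Ideal.Quotient.mk J (1 - f) = Ideal.Quotient.mk J x := by
          rw [map_sub, map_one, hf_mk, hxε]; ring
        have h2 : (1 - f) - x ∈ J := Ideal.Quotient.eq.mp h1
        have : (1 : R) - f = ((1 - f) - x) + x := by ring
        rw [this]
        exact m.add_mem (hJm h2) hxm
      have hfnotm : f ∉ m := by
        intro hfm'
        have h1 : Ideal.Quotient.mk J f * ε = Ideal.Quotient.mk J f :=
          hε_max _ (Ideal.mem_map_of_mem _ hfm')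
        rw [hf_mk] at h1
        have h2 : ε = 1 := by
          have : (1 - ε) * ε = ε - ε * ε := by ring
          rw [hε_idem.eq, sub_self] at this
          rw [this] at h1
          have := congrArg (fun z => 1 - z) h1
          simpa using this.symm
        obtain ⟨x, hxm, hxε⟩ :=
          (Ideal.mem_map_iff_of_surjective _ Ideal.Quotient.mk_surjective).mp hεm
        rw [h2] at hxε
        have h3 : (1 : R) - x ∈ J := by
          rw [← Ideal.Quotient.eq, map_one, hxε]
        have h4 : (1 : R) ∈ m := by
          have : (1 : R) = (1 - x) + x := by ring
          rw [this]
          exact m.add_mem (hJm h3) hxm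
        exact hmmax.ne_top ((Ideal.eq_top_iff_one m).mpr h4)
      have hfm : ∀ x ∈ m, f * x ∈ J := by
        intro x hxm
        have h1 : Ideal.Quotient.mk J x * ε = Ideal.Quotient.mk J x :=
          hε_max _ (Ideal.mem_map_of_mem _ hxm)
        have h2 : Ideal.Quotient.mk J (f * x) = 0 := by
          rw [map_mul, hf_mk, sub_mul, one_mul, mul_comm, h1, sub_self]
        exact Ideal.Quotient.eq_zero_iff_mem.mp h2
      have hef : e * f = 0 := by
        have h1 : Ideal.Quotient.mk J e * ε = Ideal.Quotient.mk J e :=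
          hε_max _ (Ideal.mem_map_of_mem _ hem)
        have h2 : Ideal.Quotient.mk J (e * f) = 0 := by
          rw [map_mul, hf_mk, mul_sub, mul_one, h1, sub_self]
        have h3 : e * f ∈ J := Ideal.Quotient.eq_zero_iff_mem.mp h2
        have h4 : IsIdempotentElem (e * f) := by
          show e * f * (e * f) = e * f
          calc e * f * (e * f) = (e * e) * (f * f) := by ring
            _ = e * f := by rw [he_idem.eq, hf_idem.eq]
        exact aux_idem_jacobson_eq_zero h4 h3
      -- main dichotomy
      by_cases hgood : ∃ aT ∈ Ideal.jacobson (⊥ : Ideal (R ⧸ Ie)), ¬ ∃ t ∈ mT, aT = aT * t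
      · obtain ⟨aT, haTJ, haT⟩ := hgood
        set w : M := mkT f • vbar with hwdef
        have hw0 : w ≠ 0 := by
          intro h0
          have h1 : mkT f ∈ annI := by
            rw [hannIdef, LinearMap.mem_ker, LinearMap.toSpanSingleton_apply]
            exact h0
          exact hfnotm (hannle h1)
        have hannw : ∀ s ∈ mT, s • w = 0 := by
          intro s hs
          have hs' : s ∈ Ideal.map mkT m := by
            rw [hmdef, Ideal.map_comap_of_surjective mkT hmkTsurj]
            exact hs
          obtain ⟨x, hxm, hxmk⟩ :=
            (Ideal.mem_map_iff_of_surjective mkT hmkTsurj).mp hs'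
          have hfx : f * x ∈ J := hfm x hxm
          have h1 : s • w = mkT (f * x) • vbar := by
            rw [hwdef, smul_smul, ← hxmk, ← map_mul, mul_comm x f]
          rw [h1]
          exact hcaseA _ (aux_jacobson_map mkT hmkTsurj hfx) v hvV
        have hsmall := aux_small_span_max hw0 hmT hannw haTJ haT
        intro hbot
        have hle : Submodule.span (R ⧸ Ie) {w} ≤ ZStar (R ⧸ Ie) M := le_sSup hsmall
        rw [hbot, le_bot_iff, Submodule.span_singleton_eq_bot] at hle
        exact hw0 hle
      · exfalso
        push_neg at hgood
        -- show f kills J, leading to a contradiction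
        have hfA0 : ∀ k ∈ J, f * k = 0 := by
          intro k hk
          have hkT : mkT k ∈ Ideal.jacobson (⊥ : Ideal (R ⧸ Ie)) :=
            aux_jacobson_map mkT hmkTsurj hk
          obtain ⟨tbar, htbarm, htbareq⟩ := hgood _ hkT
          have htbar' : tbar ∈ Ideal.map mkT m := by
            rw [hmdef, Ideal.map_comap_of_surjective mkT hmkTsurj]
            exact htbarm
          obtain ⟨t, htm, htmk⟩ := (Ideal.mem_map_iff_of_surjective mkT hmkTsurj).mp htbar'
          have h1 : k - k * t ∈ Ie := by
            apply Ideal.Quotient.eq_zero_iff_mem.mp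
            show mkT (k - k * t) = 0
            rw [map_sub, map_mul, htmk, ← htbareq, sub_self]
          obtain ⟨r, hr⟩ := Ideal.mem_span_singleton'.mp h1
          have h2 : f * k * (1 - t) = 0 := by
            calc f * k * (1 - t) = f * (k - k * t) := by ring
              _ = f * (r * e) := by rw [← hr]
              _ = r * (e * f) := by ring
              _ = 0 := by rw [hef, mul_zero]
          -- pass to the local ring R ⧸ span {1 - f}
          set If' : Ideal R := Ideal.span {1 - f} with hIf'def
          set mk' : R →+* R ⧸ If' := Ideal.Quotient.mk If' with hmk'def
          have hunit : ∀ u : R, u ∉ m → IsUnit (mk' u) := by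
            intro u hu
            by_contra hnu
            obtain ⟨M', hM', hM'le⟩ := Ideal.exists_le_maximal (Ideal.span {mk' u})
              (fun h => hnu (Ideal.span_singleton_eq_top.mp h))
            haveI hM''max : (Ideal.comap mk' M').IsMaximal :=
              Ideal.comap_isMaximal_of_surjective mk' Ideal.Quotient.mk_surjective
            have hmM : m ≤ Ideal.comap mk' M' := by
              intro x hx
              have hx1 : x - x * (1 - f) ∈ J := by
                have ha : Ideal.Quotient.mk J x * ε = Ideal.Quotient.mk J x :=
                  hε_max _ (Ideal.mem_map_of_mem _ hx)
                apply Ideal.Quotient.eq_zero_iff_mem.mp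
                rw [map_sub, map_mul, map_sub, map_one, hf_mk]
                rw [show (1 : R ⧸ J) - (1 - ε) = ε by ring, ha, sub_self]
              have hx2 : x * (1 - f) ∈ If' :=
                Ideal.mul_mem_left _ _ (Ideal.subset_span rfl)
              have hJM : J ≤ Ideal.comap mk' M' := sInf_le ⟨bot_le, hM''max⟩
              have hIM : If' ≤ Ideal.comap mk' M' := by
                intro z hz
                show mk' z ∈ M'
                rw [Ideal.Quotient.eq_zero_iff_mem.mpr hz]
                exact M'.zero_mem
              have : x = (x - x * (1 - f)) + x * (1 - f) := by ring
              rw [this]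
              exact Submodule.add_mem _ (hJM hx1) (hIM hx2)
            have hM''ne : Ideal.comap mk' M' ≠ ⊤ := hM''max.ne_top
            have heq : m = Ideal.comap mk' M' := hmmax.eq_of_le hM''ne hmM
            have : u ∈ Ideal.comap mk' M' := by
              show mk' u ∈ M'
              exact hM'le (Ideal.subset_span rfl)
            rw [← heq] at this
            exact hu this
          have htm' : (1 : R) - t ∉ m := by
            intro h
            have : (1 : R) ∈ m := by
              have : (1 : R) = (1 - t) + t := by ring
              rw [this]; exact m.add_mem h htm
            exact hmmax.ne_top ((Ideal.eq_top_iff_one m).mpr this)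
          have h3 : mk' (f * k) * mk' (1 - t) = 0 := by
            rw [← map_mul, h2, map_zero]
          have h4 : mk' (f * k) = 0 := ((hunit _ htm').mul_left_eq_zero).mp h3
          have h5 : f * k ∈ If' := Ideal.Quotient.eq_zero_iff_mem.mp h4
          obtain ⟨c, hc⟩ := Ideal.mem_span_singleton'.mp h5
          have h6 : f * (f * k) = f * k := by rw [← mul_assoc, hf_idem.eq]
          rw [← h6, ← hc]
          calc f * (c * (1 - f)) = c * (f - f * f) := by ring
            _ = 0 := by rw [hf_idem.eq, sub_self, mul_zero]
        -- f ∈ A0, so f * e ≡ f mod J, but e * f = 0, so f ∈ J ≤ m: contradiction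
        have hfA : Ideal.Quotient.mk J f ∈ Ideal.map (Ideal.Quotient.mk J) A0 :=
          Ideal.mem_map_of_mem _ (show f ∈ A0 from hfA0)
        have h7 : Ideal.Quotient.mk J f * ebar = Ideal.Quotient.mk J f := hebar_max _ hfA
        have h8 : f * e - f ∈ J := by
          apply Ideal.Quotient.eq_zero_iff_mem.mp
          rw [map_sub, map_mul, ← he_mk] at *
          rw [h7, sub_self]
        have h9 : f ∈ J := by
          have hfe : f * e = 0 := by rw [mul_comm]; exact hef
          rw [hfe, zero_sub] at h8
          simpa using J.neg_mem h8
        exact hfnotm (hJm h9)
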